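/- For all natural numbers t ≥ 0, n ≥ 0, and all b with 0 ≤ b < 3^t, the identity h(3^t·n + b) = (1 − h(b))·h(3^t·n) + h(b)·h(3^t·n + 1) holds (as an identity of integers). -/
import Mathlib

def h : ℕ → ℕ
  | 0 => 0
  | (n + 1) =>
    if (n + 1) % 3 = 1 then h ((n + 1) / 9) + 1
    else h ((n + 1) / 3) + ((n + 1) / 3) % 2
  decreasing_by
  · exact Nat.div_lt_self (Nat.succ_pos n) (by norm_num)
  · exact Nat.div_lt_self (Nat.succ_pos n) (by norm_num)

lemma h_zero : h 0 = 0 := by simp [h]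

lemma h_eq (n : ℕ) (hn : 0 < n) :
    h n = if n % 3 = 1 then h (n / 9) + 1 else h (n / 3) + (n / 3) % 2 := by
  match n with
  | 0 => omega
  | (k+1) => rw [h]

/-- h j = h (j/3) + j % 2 -/
lemma hM : ∀ j : ℕ, h j = h (j / 3) + j % 2 := by
  intro j
  induction j using Nat.strong_induction_on with
  | _ j ih =>
    match j with
    | 0 => simp [h_zero]
    | (k+1) =>
      rw [h_eq (k+1) (Nat.succ_pos k)]
      by_cases h3 : (k+1) % 3 = 1
      · rw [if_pos h3]
        have e9 : (k+1) / 9 = (k+1) / 3 / 3 := by omega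
        have ihq := ih ((k+1) / 3) (Nat.div_lt_self (Nat.succ_pos k) (by norm_num))
        rw [e9]
        omega
      · rw [if_neg h3]
        omega

lemma h3 (k : ℕ) : h (3 * k) = h k + k % 2 := by
  have := hM (3 * k)
  have e : 3 * k / 3 = k := by omega
  rw [e] at this
  omega

lemma h_one : h 1 = 1 := by rw [h_eq 1 one_pos]; simp [h_zero]

lemma h_two : h 2 = 0 := by rw [h_eq 2 (by norm_num)]; simp [h_zero]

lemma h31 (k : ℕ) : h (3 * k + 1) + k % 2 = h k + 1 := by
  rw [h_eq (3 * k + 1) (by omega)]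
  have e1 : (3 * k + 1) % 3 = 1 := by omega
  rw [if_pos e1]
  have e9 : (3 * k + 1) / 9 = k / 3 := by omega
  rw [e9]
  have := hM k
  omega

lemma h32 (k : ℕ) : h (3 * k + 2) = h k + k % 2 := by
  rw [h_eq (3 * k + 2) (by omega)]
  have e1 : (3 * k + 2) % 3 = 2 := by omega
  rw [if_neg (by omega)]
  have e : (3 * k + 2) / 3 = k := by omega
  rw [e]

lemma L1 (k s : ℕ) (hs : s < 3) :
    (h (3 * k + s) : ℤ) = h (3 * k) + (-1) ^ k * h s := by
  rcases Nat.mod_two_eq_zero_or_one k with hk | hk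
  · have sk : (-1 : ℤ) ^ k = 1 := Even.neg_one_pow (Nat.even_iff.mpr hk)
    rw [sk]
    interval_cases s
    · simp [h_zero]
    · have := h31 k; have := h3 k; rw [h_one]; omega
    · have := h32 k; have := h3 k; rw [h_two]; omega
  · have sk : (-1 : ℤ) ^ k = -1 := Odd.neg_one_pow (Nat.odd_iff.mpr hk)
    rw [sk]
    interval_cases s
    · simp [h_zero]
    · have := h31 k; have := h3 k; rw [h_one]; push_cast; omega
    · have := h32 k; have := h3 k; rw [h_two]; omega

lemma pow3_mod2 (t m : ℕ) : (3 ^ t * m) % 2 = m % 2 := by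
  have : 3 ^ t % 2 = 1 := Nat.odd_iff.mp (Odd.pow (by decide))
  rw [Nat.mul_mod, this]
  omega

lemma main : ∀ t m b : ℕ, b < 3 ^ t →
    (h (3 ^ t * m + b) : ℤ) = h (3 ^ t * m) + (-1) ^ m * h b := by
  intro t
  induction t with
  | zero =>
    intro m b hb
    interval_cases b
    simp [h_zero]
  | succ t ih =>
    intro m b hb
    have hb' : b / 3 < 3 ^ t := by
      have : (3:ℕ) ^ (t+1) = 3 * 3 ^ t := by ring
      omega
    set q := b / 3 with hq
    set s := b % 3 with hs
    have key : 3 ^ (t+1) * m + b = 3 * (3 ^ t * m + q) + s := by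
      have : 3 ^ (t+1) * m = 3 * (3 ^ t * m) := by ring
      omega
    have keyb : b = 3 * q + s := by omega
    have keyA : 3 ^ (t+1) * m = 3 * (3 ^ t * m) := by ring
    rw [key, keyb, keyA]
    rw [L1 _ s (by omega), L1 _ s (by omega)]
    rw [h3 (3 ^ t * m + q), h3 (3 ^ t * m), h3 q]
    have pm := pow3_mod2 t m
    rcases Nat.mod_two_eq_zero_or_one m with hm | hm <;>
      rcases Nat.mod_two_eq_zero_or_one q with hq2 | hq2
    · have e1 : (-1:ℤ)^m = 1 := Even.neg_one_pow (Nat.even_iff.mpr hm)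
      have e2 : (-1:ℤ)^q = 1 := Even.neg_one_pow (Nat.even_iff.mpr hq2)
      have e3 : (-1:ℤ)^(3^t*m+q) = 1 := Even.neg_one_pow (Nat.even_iff.mpr (by omega))
      have k2 : (3 ^ t * m + q) % 2 = 0 := by omega
      have pm' : (3 ^ t * m) % 2 = 0 := by omega
      rw [e1, e2, e3, k2, pm', hq2]
      push_cast
      rw [ih m q hb', e1]
      ring
    · have e1 : (-1:ℤ)^m = 1 := Even.neg_one_pow (Nat.even_iff.mpr hm)
      have e2 : (-1:ℤ)^q = -1 := Odd.neg_one_pow (Nat.odd_iff.mpr hq2)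
      have e3 : (-1:ℤ)^(3^t*m+q) = -1 := Odd.neg_one_pow (Nat.odd_iff.mpr (by omega))
      have k2 : (3 ^ t * m + q) % 2 = 1 := by omega
      have pm' : (3 ^ t * m) % 2 = 0 := by omega
      rw [e1, e2, e3, k2, pm', hq2]
      push_cast
      rw [ih m q hb', e1]
      ring
    · have e1 : (-1:ℤ)^m = -1 := Odd.neg_one_pow (Nat.odd_iff.mpr hm)
      have e2 : (-1:ℤ)^q = 1 := Even.neg_one_pow (Nat.even_iff.mpr hq2)
      have e3 : (-1:ℤ)^(3^t*m+q) = -1 := Odd.neg_one_pow (Nat.odd_iff.mpr (by omega))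
      have k2 : (3 ^ t * m + q) % 2 = 1 := by omega
      have pm' : (3 ^ t * m) % 2 = 1 := by omega
      rw [e1, e2, e3, k2, pm', hq2]
      push_cast
      rw [ih m q hb', e1]
      ring
    · have e1 : (-1:ℤ)^m = -1 := Odd.neg_one_pow (Nat.odd_iff.mpr hm)
      have e2 : (-1:ℤ)^q = -1 := Odd.neg_one_pow (Nat.odd_iff.mpr hq2)
      have e3 : (-1:ℤ)^(3^t*m+q) = 1 := Even.neg_one_pow (Nat.even_iff.mpr (by omega))
      have k2 : (3 ^ t * m + q) % 2 = 0 := by omega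
      have pm' : (3 ^ t * m) % 2 = 1 := by omega
      rw [e1, e2, e3, k2, pm', hq2]
      push_cast
      rw [ih m q hb', e1]
      ring

theorem stmt_14 (t n b : ℕ) (hb : b < 3 ^ t) :
    (h (3 ^ t * n + b) : ℤ) =
      (1 - (h b : ℤ)) * h (3 ^ t * n) + (h b : ℤ) * h (3 ^ t * n + 1) := by
  rcases Nat.eq_zero_or_pos t with rfl | ht
  · interval_cases b
    simp [h_zero]
  · have h1t : 1 < 3 ^ t := by
      calc 1 < 3 ^ 1 := by norm_num
      _ ≤ 3 ^ t := Nat.pow_le_pow_right (by norm_num) ht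
    have e1 := main t n 1 h1t
    have eb := main t n b hb
    rw [eb, e1, h_one]
    push_cast
    ring
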